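/- Let N ≥ 2 and 1 ≤ k ≤ N−1, and let c ≥ 0. Define ũ : ℝ^N → ℝ by ũ(x) = tanh((x_N − c)/√2) if x_N ≥ c, ũ(x) = 0 if |x_N| < c, and ũ(x) = −tanh((x_N + c)/√2) if x_N ≤ −c. Then ũ is continuous, |ũ(x)| < 1 for all x, ũ is a viscosity solution of P⁻_k(D²u) + u − u³ = 0 in ℝ^N, and ũ(x', x_N) → 1 as x_N → +∞ and as x_N → −∞ (in particular ũ is not monotone in the x_N-direction). -/

import Mathlib

/-- The truncated Laplacian `P⁻ₖ(X)`: the sum of the `k` smallest eigenvalues of the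
symmetric matrix `X`, expressed via the Ky Fan variational principle as the infimum of
`∑ᵢ ⟨X vᵢ, vᵢ⟩` over orthonormal families `v₁, …, v_k`. -/
noncomputable def truncLap {N : ℕ} (k : ℕ) (X : Matrix (Fin N) (Fin N) ℝ) : ℝ :=
  sInf { s : ℝ | ∃ v : Fin k → (Fin N → ℝ),
    (∀ i j, dotProduct (v i) (v j) = if i = j then (1 : ℝ) else 0) ∧
    s = ∑ i, dotProduct (X.mulVec (v i)) (v i) }

/-- The Hessian matrix of `φ : ℝ^N → ℝ` at `x`. -/
noncomputable def hess {N : ℕ} (φ : EuclideanSpace ℝ (Fin N) → ℝ)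
    (x : EuclideanSpace ℝ (Fin N)) : Matrix (Fin N) (Fin N) ℝ :=
  fun i j => iteratedFDeriv ℝ 2 φ x ![EuclideanSpace.single i 1, EuclideanSpace.single j 1]

/-- `u` is a viscosity subsolution of `P⁻ₖ(D²u) + f(u) = 0` in `ℝ^N`. -/
def IsViscSubsol {N : ℕ} (k : ℕ) (f : ℝ → ℝ) (u : EuclideanSpace ℝ (Fin N) → ℝ) : Prop :=
  ∀ φ : EuclideanSpace ℝ (Fin N) → ℝ, ContDiff ℝ 2 φ →
    ∀ x₀, IsLocalMax (fun x => u x - φ x) x₀ →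
      0 ≤ truncLap k (hess φ x₀) + f (u x₀)

/-- `u` is a viscosity supersolution of `P⁻ₖ(D²u) + f(u) = 0` in `ℝ^N`. -/
def IsViscSupersol {N : ℕ} (k : ℕ) (f : ℝ → ℝ) (u : EuclideanSpace ℝ (Fin N) → ℝ) : Prop :=
  ∀ φ : EuclideanSpace ℝ (Fin N) → ℝ, ContDiff ℝ 2 φ →
    ∀ x₀, IsLocalMin (fun x => u x - φ x) x₀ →
      truncLap k (hess φ x₀) + f (u x₀) ≤ 0

/- ======================= auxiliary development ======================= -/

open Real Filter Set

section Tanh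

lemma StmtAux.tanh_lt_one (x : ℝ) : Real.tanh x < 1 := by
  rw [Real.tanh_eq_sinh_div_cosh, div_lt_one (Real.cosh_pos x)]
  rw [Real.sinh_eq, Real.cosh_eq]
  have := Real.exp_pos (-x); linarith

lemma StmtAux.neg_one_lt_tanh (x : ℝ) : -1 < Real.tanh x := by
  rw [Real.tanh_eq_sinh_div_cosh, lt_div_iff₀ (Real.cosh_pos x)]
  rw [Real.sinh_eq, Real.cosh_eq]
  have := Real.exp_pos x; nlinarith [Real.exp_pos (-x)]

lemma StmtAux.tanh_nonneg {x : ℝ} (hx : 0 ≤ x) : 0 ≤ Real.tanh x :=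
  div_nonneg (Real.sinh_nonneg_iff.2 hx) (Real.cosh_pos x).le |>.trans_eq
    (Real.tanh_eq_sinh_div_cosh x).symm

lemma StmtAux.tanh_pos {x : ℝ} (hx : 0 < x) : 0 < Real.tanh x := by
  rw [Real.tanh_eq_sinh_div_cosh]
  exact div_pos (Real.sinh_pos_iff.2 hx) (Real.cosh_pos x)

lemma StmtAux.hasDerivAt_tanh (x : ℝ) :
    HasDerivAt Real.tanh (1 - Real.tanh x ^ 2) x := by
  have h := (Real.hasDerivAt_sinh x).div (Real.hasDerivAt_cosh x) (Real.cosh_pos x).ne'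
  have hfun : (Real.sinh / Real.cosh : ℝ → ℝ) = Real.tanh := by
    funext y; rw [Pi.div_apply, Real.tanh_eq_sinh_div_cosh]
  rw [hfun] at h
  refine h.congr_deriv ?_
  have h2 := Real.cosh_sq_sub_sinh_sq x
  have hc := (Real.cosh_pos x).ne'
  rw [Real.tanh_eq_sinh_div_cosh]
  field_simp

lemma StmtAux.tanh_eq_exp (x : ℝ) :
    Real.tanh x = (1 - Real.exp (-(2*x))) / (1 + Real.exp (-(2*x))) := by
  rw [Real.tanh_eq_sinh_div_cosh, Real.sinh_eq, Real.cosh_eq]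
  have h1 : Real.exp (-(2*x)) = Real.exp (-x) * Real.exp (-x) := by
    rw [← Real.exp_add]; ring_nf
  have h2 : Real.exp x * Real.exp (-x) = 1 := by
    rw [← Real.exp_add]; simp
  have h3 := Real.exp_pos x
  have h4 := Real.exp_pos (-x)
  rw [h1]
  field_simp
  nlinarith [h2]

lemma StmtAux.tendsto_tanh_atTop : Tendsto Real.tanh atTop (nhds 1) := by
  have h0 : Tendsto (fun x : ℝ => Real.exp (-(2*x))) atTop (nhds 0) := by
    apply Real.tendsto_exp_atBot.comp
    have : Tendsto (fun x : ℝ => 2*x) atTop atTop :=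
      Tendsto.const_mul_atTop (by norm_num) tendsto_id
    exact tendsto_neg_atTop_atBot.comp this
  have : Tendsto (fun x : ℝ => (1 - Real.exp (-(2*x))) / (1 + Real.exp (-(2*x))))
      atTop (nhds 1) := by
    have := (tendsto_const_nhds (x := (1:ℝ)).sub h0).div
      ((tendsto_const_nhds (x := (1:ℝ))).add h0) (by norm_num)
    rw [show ((1:ℝ) - 0) / (1 + 0) = 1 by norm_num] at this; exact this
  exact this.congr fun x => (StmtAux.tanh_eq_exp x).symm

lemma StmtAux.pairW_fst (ε b : ℝ) :
    ∀ t, HasDerivAt (fun t => ε * Real.tanh ((t + b)/Real.sqrt 2))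
      (ε * (1 - Real.tanh ((t + b)/Real.sqrt 2)^2)/Real.sqrt 2) t := by
  intro t
  have hin : HasDerivAt (fun t : ℝ => (t + b)/Real.sqrt 2) (1/Real.sqrt 2) t :=
    ((hasDerivAt_id t).add_const b).div_const _
  have h := ((StmtAux.hasDerivAt_tanh ((t + b)/Real.sqrt 2)).comp t hin).const_mul ε
  refine h.congr_deriv ?_
  ring

lemma StmtAux.pairW_snd (ε b : ℝ) (hε : ε^3 = ε) :
    ∀ t, HasDerivAt (fun t => ε * (1 - Real.tanh ((t + b)/Real.sqrt 2)^2)/Real.sqrt 2)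
      ((ε * Real.tanh ((t + b)/Real.sqrt 2))^3 - ε * Real.tanh ((t + b)/Real.sqrt 2)) t := by
  intro t
  have hT : ∀ s, HasDerivAt (fun t => Real.tanh ((t + b)/Real.sqrt 2))
      ((1 - Real.tanh ((s + b)/Real.sqrt 2)^2) * (1/Real.sqrt 2)) s := by
    intro s
    have hin : HasDerivAt (fun t : ℝ => (t + b)/Real.sqrt 2) (1/Real.sqrt 2) s :=
      ((hasDerivAt_id s).add_const b).div_const _
    exact (StmtAux.hasDerivAt_tanh ((s + b)/Real.sqrt 2)).comp s hin
  have hsq : HasDerivAt (fun t => Real.tanh ((t + b)/Real.sqrt 2) ^ 2)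
      (2 * Real.tanh ((t + b)/Real.sqrt 2) ^ 1 *
        ((1 - Real.tanh ((t + b)/Real.sqrt 2)^2) * (1/Real.sqrt 2))) t := (hT t).pow 2
  have h2 : HasDerivAt (fun t => ε * (1 - Real.tanh ((t + b)/Real.sqrt 2)^2)/Real.sqrt 2)
      (ε * (0 - 2 * Real.tanh ((t + b)/Real.sqrt 2) ^ 1 *
        ((1 - Real.tanh ((t + b)/Real.sqrt 2)^2) * (1/Real.sqrt 2)))/Real.sqrt 2) t := by
    exact (((hasDerivAt_const t (1:ℝ)).sub hsq).const_mul ε).div_const _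
  convert h2 using 1
  have s2 : Real.sqrt 2 * Real.sqrt 2 = 2 := Real.mul_self_sqrt (by norm_num)
  have hne : Real.sqrt 2 ≠ 0 := by positivity
  set T := Real.tanh ((t + b)/Real.sqrt 2)
  field_simp
  have s3 : Real.sqrt 2 ^ 2 = 2 := Real.sq_sqrt (by norm_num)
  linear_combination (ε^3*T^3 - ε*T) * s3 + (2*T^3) * hε

end Tanh

section SDT

lemma StmtAux.sdt_max {g g' : ℝ → ℝ} {q : ℝ} (h1 : ∀ s, HasDerivAt g (g' s) s)
    (h2 : HasDerivAt g' q 0) (h3 : IsLocalMax g 0) : q ≤ 0 := by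
  by_contra hq
  push_neg at hq
  have hg'0 : g' 0 = 0 := by rw [← (h1 0).deriv]; exact h3.deriv_eq_zero
  have hslope : Tendsto (slope g' 0) (nhdsWithin 0 {(0:ℝ)}ᶜ) (nhds q) :=
    hasDerivAt_iff_tendsto_slope.1 h2
  have hpos : ∀ᶠ s in nhdsWithin 0 {(0:ℝ)}ᶜ, 0 < slope g' 0 s :=
    hslope.eventually (eventually_gt_nhds hq)
  rw [eventually_nhdsWithin_iff] at hpos
  obtain ⟨ε, hε, hball⟩ := Metric.eventually_nhds_iff.1 (hpos.and h3)
  set δ := ε / 2 with hδ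
  have hδpos : 0 < δ := by positivity
  have hmono : StrictMonoOn g (Icc 0 δ) := by
    apply strictMonoOn_of_deriv_pos (convex_Icc 0 δ)
    · exact fun s _ => (h1 s).continuousAt.continuousWithinAt
    · intro x hx
      rw [interior_Icc] at hx
      have hd : dist x (0:ℝ) < ε := by
        rw [Real.dist_eq, sub_zero, abs_of_pos hx.1]
        have := hx.2; simp [hδ] at this ⊢; linarith
      have hx0 : x ∈ ({(0:ℝ)}ᶜ : Set ℝ) := by simp; exact hx.1.ne'
      have hsl := (hball hd).1 hx0
      rw [slope_def_field, hg'0, sub_zero, sub_zero] at hsl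
      rw [(h1 x).deriv]
      have := hx.1
      exact (div_pos_iff.1 hsl).elim (fun h => h.1) (fun h => absurd h.2 (by linarith))
  have hlt : g 0 < g δ :=
    hmono (left_mem_Icc.2 hδpos.le) (right_mem_Icc.2 hδpos.le) hδpos
  have hle : g δ ≤ g 0 := by
    have hd : dist δ (0:ℝ) < ε := by
      rw [Real.dist_eq, sub_zero, abs_of_pos hδpos]; simp [hδ]; linarith
    exact (hball hd).2
  linarith

lemma StmtAux.sdt_min {g g' : ℝ → ℝ} {q : ℝ} (h1 : ∀ s, HasDerivAt g (g' s) s)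
    (h2 : HasDerivAt g' q 0) (h3 : IsLocalMin g 0) : 0 ≤ q := by
  have := StmtAux.sdt_max (g := fun s => -g s) (g' := fun s => -g' s) (q := -q)
    (fun s => (h1 s).neg) h2.neg h3.neg
  linarith

lemma StmtAux.bdry_Ici {f : ℝ → ℝ} {a d : ℝ} (hmax : IsLocalMax f a)
    (hd : HasDerivWithinAt f d (Ici a) a) : d ≤ 0 := by
  have h := hasDerivWithinAt_iff_tendsto_slope.1 hd
  rw [Ici_sdiff_left] at h
  refine le_of_tendsto h ?_
  have h1 : ∀ᶠ t in nhdsWithin a (Ioi a), f t ≤ f a := nhdsWithin_le_nhds hmax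
  filter_upwards [h1, self_mem_nhdsWithin] with t ht hta
  rw [slope_def_field]
  apply div_nonpos_of_nonpos_of_nonneg <;> [linarith; linarith [mem_Ioi.1 hta]]

lemma StmtAux.bdry_Iic {f : ℝ → ℝ} {a d : ℝ} (hmax : IsLocalMax f a)
    (hd : HasDerivWithinAt f d (Iic a) a) : 0 ≤ d := by
  have h := hasDerivWithinAt_iff_tendsto_slope.1 hd
  rw [Iic_diff_right] at h
  refine ge_of_tendsto h ?_
  have h1 : ∀ᶠ t in nhdsWithin a (Iio a), f t ≤ f a := nhdsWithin_le_nhds hmax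
  filter_upwards [h1, self_mem_nhdsWithin] with t ht hta
  rw [slope_def_field]
  have h2 : f t - f a ≤ 0 := by linarith
  have h3 : t - a < 0 := by linarith [mem_Iio.1 hta]
  exact div_nonneg_of_nonpos h2 h3.le

end SDT

section LinAlg

set_option linter.unusedSectionVars false

lemma StmtAux.upd0 {E : Type*} [NormedAddCommGroup E] [NormedSpace ℝ E] (y z : E) :
    ∀ x : E, (![x, y] : Fin 2 → E) = Function.update ![z, y] 0 x := by
  intro x; funext i; fin_cases i <;> simp

lemma StmtAux.upd1 {E : Type*} [NormedAddCommGroup E] [NormedSpace ℝ E] (x z : E) :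
    ∀ y : E, (![x, y] : Fin 2 → E) = Function.update ![x, z] 1 y := by
  intro y; funext i; fin_cases i <;> simp

noncomputable def StmtAux.slot0 {E : Type*} [NormedAddCommGroup E] [NormedSpace ℝ E]
    (f : ContinuousMultilinearMap ℝ (fun _ : Fin 2 => E) ℝ) (y : E) :
    E →ₗ[ℝ] ℝ where
  toFun x := f ![x, y]
  map_add' a b := by
    show f ![a + b, y] = f ![a, y] + f ![b, y]
    rw [StmtAux.upd0 y 0 (a+b), StmtAux.upd0 y 0 a, StmtAux.upd0 y 0 b]
    exact f.map_update_add _ 0 a b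
  map_smul' r a := by
    show f ![r • a, y] = r • f ![a, y]
    rw [StmtAux.upd0 y 0 (r • a), StmtAux.upd0 y 0 a]
    exact f.map_update_smul _ 0 r a

noncomputable def StmtAux.slot1 {E : Type*} [NormedAddCommGroup E] [NormedSpace ℝ E]
    (f : ContinuousMultilinearMap ℝ (fun _ : Fin 2 => E) ℝ) (x : E) :
    E →ₗ[ℝ] ℝ where
  toFun y := f ![x, y]
  map_add' a b := by
    show f ![x, a + b] = f ![x, a] + f ![x, b]
    rw [StmtAux.upd1 x 0 (a+b), StmtAux.upd1 x 0 a, StmtAux.upd1 x 0 b]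
    exact f.map_update_add _ 1 a b
  map_smul' r a := by
    show f ![x, r • a] = r • f ![x, a]
    rw [StmtAux.upd1 x 0 (r • a), StmtAux.upd1 x 0 a]
    exact f.map_update_smul _ 1 r a

lemma StmtAux.euclid_decomp {N : ℕ} (v : EuclideanSpace ℝ (Fin N)) :
    v = ∑ i, v i • EuclideanSpace.single i (1:ℝ) := by
  ext j
  simp only [WithLp.ofLp_sum, Finset.sum_apply]
  simp only [PiLp.smul_apply, EuclideanSpace.single_apply, smul_eq_mul, mul_ite, mul_one,
    mul_zero]
  simp

lemma StmtAux.quad_expand {N : ℕ} (f : ContinuousMultilinearMap ℝ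
    (fun _ : Fin 2 => EuclideanSpace ℝ (Fin N)) ℝ) (v : EuclideanSpace ℝ (Fin N)) :
    f ![v, v] = ∑ i, ∑ j, v i * v j *
      f ![EuclideanSpace.single i 1, EuclideanSpace.single j 1] := by
  have h0 : f ![v, v] = StmtAux.slot0 f v v := rfl
  rw [h0, StmtAux.euclid_decomp v, map_sum]
  rw [← StmtAux.euclid_decomp v]
  refine Finset.sum_congr rfl fun i _ => ?_
  rw [map_smul]
  have h1 : StmtAux.slot0 f v (EuclideanSpace.single i 1) =
      StmtAux.slot1 f (EuclideanSpace.single i 1) v := rfl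
  rw [h1, StmtAux.euclid_decomp v, map_sum, ← StmtAux.euclid_decomp v]
  rw [Finset.smul_sum]
  refine Finset.sum_congr rfl fun j _ => ?_
  rw [map_smul]
  show v i • (v j • f ![_, _]) = _
  simp only [smul_eq_mul]
  ring

lemma StmtAux.quad_eq {N : ℕ} (φ : EuclideanSpace ℝ (Fin N) → ℝ)
    (x v : EuclideanSpace ℝ (Fin N)) :
    dotProduct ((hess φ x).mulVec v) v = fderiv ℝ (fderiv ℝ φ) x v v := by
  have h2 : iteratedFDeriv ℝ 2 φ x ![v, v] = fderiv ℝ (fderiv ℝ φ) x v v := by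
    rw [iteratedFDeriv_two_apply]; rfl
  rw [← h2, StmtAux.quad_expand]
  simp only [dotProduct, Matrix.mulVec, hess]
  refine Finset.sum_congr rfl fun i _ => ?_
  rw [Finset.sum_mul]
  refine Finset.sum_congr rfl fun j _ => ?_
  ring

def StmtAux.uv {N : ℕ} (a : Fin N) : Fin N → ℝ := fun m => if m = a then 1 else 0

lemma StmtAux.quad_eq' {N : ℕ} (φ : EuclideanSpace ℝ (Fin N) → ℝ)
    (x : EuclideanSpace ℝ (Fin N)) (v : Fin N → ℝ) :
    dotProduct ((hess φ x).mulVec v) v =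
      fderiv ℝ (fderiv ℝ φ) x (WithLp.toLp 2 v) (WithLp.toLp 2 v) :=
  StmtAux.quad_eq φ x (WithLp.toLp 2 v)

lemma StmtAux.uv_dot {N : ℕ} (a b : Fin N) :
    dotProduct (StmtAux.uv a) (StmtAux.uv b) = if a = b then (1:ℝ) else 0 := by
  simp only [dotProduct, StmtAux.uv, ite_mul, one_mul, zero_mul]
  rcases eq_or_ne a b with h | h
  · subst h; simp
  · simp only [if_neg h]
    rw [Finset.sum_eq_zero]
    intro m _
    rcases eq_or_ne m a with h1 | h1
    · subst h1; simp [h]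
    · simp [h1]

lemma StmtAux.bessel {N k : ℕ} (v : Fin k → Fin N → ℝ)
    (hON : ∀ i j, dotProduct (v i) (v j) = if i = j then (1:ℝ) else 0)
    (ℓ : Fin N) : ∑ i, (v i ℓ)^2 ≤ 1 := by
  set a : Fin k → ℝ := fun i => v i ℓ with ha
  set z : Fin N → ℝ := fun m => (if m = ℓ then 1 else 0) - ∑ i, a i * v i m with hz
  have hnn : 0 ≤ ∑ m, z m ^ 2 := Finset.sum_nonneg fun m _ => sq_nonneg _
  have key : ∑ m, z m ^ 2 = 1 - ∑ i, a i ^ 2 := by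
    have e1 : ∀ m, z m ^ 2 = (if m = ℓ then (1:ℝ) else 0)
        - 2 * (if m = ℓ then (1:ℝ) else 0) * (∑ i, a i * v i m)
        + (∑ i, a i * v i m) * (∑ j, a j * v j m) := by
      intro m
      rcases eq_or_ne m ℓ with h | h <;> simp [hz, h] <;> ring
    rw [Finset.sum_congr rfl fun m _ => e1 m]
    rw [Finset.sum_add_distrib, Finset.sum_sub_distrib]
    have s1 : ∑ m, (if m = ℓ then (1:ℝ) else 0) = 1 := by simp
    have s2 : ∑ m, 2 * (if m = ℓ then (1:ℝ) else 0) * (∑ i, a i * v i m)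
        = 2 * ∑ i, a i ^ 2 := by
      rw [Finset.sum_eq_single ℓ]
      · rw [if_pos rfl, mul_one, Finset.mul_sum, Finset.mul_sum]
        refine Finset.sum_congr rfl fun i _ => ?_
        show 2 * (a i * v i ℓ) = 2 * a i ^ 2
        rw [ha]; ring
      · intro m _ h; simp [h]
      · intro h; exact absurd (Finset.mem_univ ℓ) h
    have s3 : ∑ m, (∑ i, a i * v i m) * (∑ j, a j * v j m) = ∑ i, a i ^ 2 := by
      have e2 : ∀ m, (∑ i, a i * v i m) * (∑ j, a j * v j m)
          = ∑ i, ∑ j, a i * a j * (v i m * v j m) := by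
        intro m
        rw [Finset.sum_mul]
        refine Finset.sum_congr rfl fun i _ => ?_
        rw [Finset.mul_sum]
        refine Finset.sum_congr rfl fun j _ => ?_
        ring
      rw [Finset.sum_congr rfl fun m _ => e2 m]
      rw [Finset.sum_comm]
      have e3 : ∀ i, ∑ m, ∑ j, a i * a j * (v i m * v j m) = a i ^ 2 := by
        intro i
        rw [Finset.sum_comm]
        have e4 : ∀ j, ∑ m, a i * a j * (v i m * v j m)
            = a i * a j * (if i = j then (1:ℝ) else 0) := by
          intro j
          rw [← hON i j]
          simp only [dotProduct]
          rw [Finset.mul_sum]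
        rw [Finset.sum_congr rfl fun j _ => e4 j]
        rw [Finset.sum_eq_single i]
        · simp; ring
        · intro j _ h; simp [Ne.symm h]
        · intro h; exact absurd (Finset.mem_univ i) h
      exact Finset.sum_congr rfl fun i _ => e3 i
    rw [s1, s2, s3]; ring
  rw [key] at hnn
  have : ∑ i, a i ^ 2 ≤ 1 := by linarith
  simpa [ha] using this

lemma StmtAux.unit_comp_abs_le {N : ℕ} {x : Fin N → ℝ}
    (hx : dotProduct x x = 1) (m : Fin N) : |x m| ≤ 1 := by
  have hx' : ∑ j, x j * x j = 1 := hx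
  have h2 : x m * x m ≤ ∑ j, x j * x j := Finset.single_le_sum
    (f := fun j => x j * x j) (fun j _ => mul_self_nonneg (x j)) (Finset.mem_univ m)
  nlinarith [abs_nonneg (x m), sq_abs (x m)]

lemma StmtAux.dot_quad_abs_le {N : ℕ} (X : Matrix (Fin N) (Fin N) ℝ) {x : Fin N → ℝ}
    (hx : dotProduct x x = 1) :
    |dotProduct (X.mulVec x) x| ≤ ∑ j, ∑ l, |X j l| := by
  simp only [dotProduct, Matrix.mulVec]
  calc |∑ j, (∑ l, X j l * x l) * x j| ≤ ∑ j, |(∑ l, X j l * x l) * x j| :=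
        Finset.abs_sum_le_sum_abs _ _
    _ ≤ ∑ j, ∑ l, |X j l| := by
        refine Finset.sum_le_sum fun j _ => ?_
        rw [abs_mul]
        have hA : |∑ l, X j l * x l| ≤ ∑ l, |X j l| := by
          calc |∑ l, X j l * x l| ≤ ∑ l, |X j l * x l| := Finset.abs_sum_le_sum_abs _ _
            _ ≤ ∑ l, |X j l| := by
                refine Finset.sum_le_sum fun l _ => ?_
                rw [abs_mul]
                have := StmtAux.unit_comp_abs_le hx l
                nlinarith [abs_nonneg (X j l)]
        have hB := StmtAux.unit_comp_abs_le hx j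
        have hC : (0:ℝ) ≤ |∑ l, X j l * x l| := abs_nonneg _
        nlinarith

lemma StmtAux.truncLap_bddBelow {N k : ℕ} (X : Matrix (Fin N) (Fin N) ℝ) :
    BddBelow { s : ℝ | ∃ v : Fin k → (Fin N → ℝ),
      (∀ i j, dotProduct (v i) (v j) = if i = j then (1 : ℝ) else 0) ∧
      s = ∑ i, dotProduct (X.mulVec (v i)) (v i) } := by
  refine ⟨-(k * ∑ j, ∑ l, |X j l|), ?_⟩
  rintro s ⟨v, hON, rfl⟩
  have h1 : ∀ i : Fin k, -(∑ j, ∑ l, |X j l|) ≤ dotProduct (X.mulVec (v i)) (v i) := by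
    intro i
    have := StmtAux.dot_quad_abs_le X (x := v i) (by simpa using hON i i)
    have := neg_abs_le (dotProduct (X.mulVec (v i)) (v i))
    linarith
  calc -(k * ∑ j, ∑ l, |X j l|) = ∑ _i : Fin k, -(∑ j, ∑ l, |X j l|) := by
        rw [Finset.sum_const, Finset.card_univ, Fintype.card_fin, nsmul_eq_mul]; ring
    _ ≤ ∑ i, dotProduct (X.mulVec (v i)) (v i) := Finset.sum_le_sum fun i _ => h1 i

lemma StmtAux.truncLap_le {N k : ℕ} (X : Matrix (Fin N) (Fin N) ℝ)
    (v : Fin k → (Fin N → ℝ))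
    (hON : ∀ i j, dotProduct (v i) (v j) = if i = j then (1 : ℝ) else 0) :
    truncLap k X ≤ ∑ i, dotProduct (X.mulVec (v i)) (v i) :=
  csInf_le (StmtAux.truncLap_bddBelow X) ⟨v, hON, rfl⟩

lemma StmtAux.le_truncLap {N k : ℕ} (X : Matrix (Fin N) (Fin N) ℝ) (b : ℝ)
    (hk : ∃ e : Fin k → Fin N, Function.Injective e)
    (hb : ∀ v : Fin k → (Fin N → ℝ),
      (∀ i j, dotProduct (v i) (v j) = if i = j then (1 : ℝ) else 0) →
      b ≤ ∑ i, dotProduct (X.mulVec (v i)) (v i)) :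
    b ≤ truncLap k X := by
  obtain ⟨e, he⟩ := hk
  refine le_csInf ⟨_, ⟨fun i => StmtAux.uv (e i), fun i j => ?_, rfl⟩⟩ ?_
  · rw [StmtAux.uv_dot]
    rcases eq_or_ne i j with h | h
    · simp [h]
    · rw [if_neg (fun hc => h (he hc)), if_neg h]
  · rintro s ⟨v, hON, rfl⟩
    exact hb v hON

end LinAlg

section Key
variable {N : ℕ}

lemma StmtAux.line_hasDerivAt (x₀ v : EuclideanSpace ℝ (Fin N)) (s : ℝ) :
    HasDerivAt (fun s : ℝ => x₀ + s • v) v s := by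
  have h : HasDerivAt (fun s : ℝ => s • v) ((1:ℝ) • v) s :=
    (hasDerivAt_id s).smul_const v
  rw [one_smul] at h
  exact h.const_add x₀

lemma StmtAux.phi_comp_hasDerivAt {φ : EuclideanSpace ℝ (Fin N) → ℝ}
    (hφ : ContDiff ℝ 2 φ) (x₀ v : EuclideanSpace ℝ (Fin N)) (s : ℝ) :
    HasDerivAt (fun s : ℝ => φ (x₀ + s • v)) (fderiv ℝ φ (x₀ + s • v) v) s := by
  have hd : HasFDerivAt φ (fderiv ℝ φ (x₀ + s • v)) (x₀ + s • v) :=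
    (hφ.differentiable (by norm_num) _).hasFDerivAt
  exact hd.comp_hasDerivAt s (StmtAux.line_hasDerivAt x₀ v s)

lemma StmtAux.phi_comp_deriv2 {φ : EuclideanSpace ℝ (Fin N) → ℝ}
    (hφ : ContDiff ℝ 2 φ) (x₀ v : EuclideanSpace ℝ (Fin N)) :
    HasDerivAt (fun s : ℝ => fderiv ℝ φ (x₀ + s • v) v)
      (fderiv ℝ (fderiv ℝ φ) x₀ v v) 0 := by
  have hf1 : ContDiff ℝ 1 (fderiv ℝ φ) := hφ.fderiv_right (le_refl _)
  have hd : HasFDerivAt (fderiv ℝ φ) (fderiv ℝ (fderiv ℝ φ) x₀) x₀ :=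
    (hf1.differentiable (by norm_num) x₀).hasFDerivAt
  have hd' : HasFDerivAt (fderiv ℝ φ) (fderiv ℝ (fderiv ℝ φ) x₀) (x₀ + (0:ℝ) • v) := by
    simpa using hd
  have h1 : HasDerivAt (fun s : ℝ => fderiv ℝ φ (x₀ + s • v))
      (fderiv ℝ (fderiv ℝ φ) x₀ v) 0 := by
    have := hd'.comp_hasDerivAt 0 (StmtAux.line_hasDerivAt x₀ v 0)
    exact this
  have h2 := h1.clm_apply (hasDerivAt_const (0:ℝ) v)
  simpa using h2

lemma StmtAux.key_max {φ : EuclideanSpace ℝ (Fin N) → ℝ} (hφ : ContDiff ℝ 2 φ)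
    {u : EuclideanSpace ℝ (Fin N) → ℝ}
    (x₀ v : EuclideanSpace ℝ (Fin N)) {ℓ : Fin N} (W V : ℝ → ℝ)
    (hW : ∀ t, HasDerivAt W (V t) t)
    (hV : ∀ t, HasDerivAt V (W t ^ 3 - W t) t)
    (heq : ∀ᶠ s in nhds (0:ℝ), u (x₀ + s • v) = W (x₀ ℓ + s * v ℓ))
    (hmax : IsLocalMax (fun x => u x - φ x) x₀) :
    (v ℓ)^2 * (W (x₀ ℓ) ^ 3 - W (x₀ ℓ)) ≤ fderiv ℝ (fderiv ℝ φ) x₀ v v := by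
  set t₀ := x₀ ℓ with ht₀
  set h : ℝ → ℝ := fun s => W (t₀ + s * v ℓ) - φ (x₀ + s • v) with hh
  set h' : ℝ → ℝ := fun s => v ℓ * V (t₀ + s * v ℓ) - fderiv ℝ φ (x₀ + s • v) v with hh'
  have hinner : ∀ s : ℝ, HasDerivAt (fun s : ℝ => t₀ + s * v ℓ) (v ℓ) s := by
    intro s
    simpa using ((hasDerivAt_id s).mul_const (v ℓ)).const_add t₀
  have hd1 : ∀ s, HasDerivAt h (h' s) s := by
    intro s
    have hWc : HasDerivAt (fun s : ℝ => W (t₀ + s * v ℓ)) (V (t₀ + s * v ℓ) * v ℓ) s :=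
      (hW _).comp s (hinner s)
    have := hWc.sub (StmtAux.phi_comp_hasDerivAt hφ x₀ v s)
    refine this.congr_deriv ?_
    simp [hh']; ring
  have hd2 : HasDerivAt h'
      ((v ℓ)^2 * (W t₀ ^ 3 - W t₀) - fderiv ℝ (fderiv ℝ φ) x₀ v v) 0 := by
    have hVc : HasDerivAt (fun s : ℝ => V (t₀ + s * v ℓ))
        ((W (t₀ + 0 * v ℓ) ^ 3 - W (t₀ + 0 * v ℓ)) * v ℓ) 0 := (hV _).comp 0 (hinner 0)
    have := (hVc.const_mul (v ℓ)).sub (StmtAux.phi_comp_deriv2 hφ x₀ v)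
    refine this.congr_deriv ?_
    simp; ring
  have hloc : IsLocalMax h 0 := by
    have htd : Tendsto (fun s : ℝ => x₀ + s • v) (nhds 0) (nhds x₀) := by
      have : Continuous (fun s : ℝ => x₀ + s • v) :=
        continuous_const.add (continuous_id.smul continuous_const)
      have h0 : x₀ + (0:ℝ) • v = x₀ := by simp
      have hca := this.continuousAt (x := (0:ℝ))
      rw [ContinuousAt, h0] at hca
      exact hca
    have hev := htd.eventually hmax
    have h00 : u x₀ = W t₀ := by
      have := heq.self_of_nhds; simpa using this
    filter_upwards [hev, heq] with s hs hseq
    simp only [hh]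
    rw [← hseq]
    have h0' : u x₀ - φ x₀ = W (t₀ + 0 * v ℓ) - φ (x₀ + (0:ℝ) • v) := by
      simp [h00]
    calc u (x₀ + s • v) - φ (x₀ + s • v) ≤ u x₀ - φ x₀ := by simpa using hs
      _ = W (t₀ + 0 * v ℓ) - φ (x₀ + (0:ℝ) • v) := h0'
      _ = _ := by simp
  have := StmtAux.sdt_max hd1 hd2 hloc
  linarith

lemma StmtAux.key_min {φ : EuclideanSpace ℝ (Fin N) → ℝ} (hφ : ContDiff ℝ 2 φ)
    {u : EuclideanSpace ℝ (Fin N) → ℝ}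
    (x₀ v : EuclideanSpace ℝ (Fin N)) {ℓ : Fin N} (W V : ℝ → ℝ)
    (hW : ∀ t, HasDerivAt W (V t) t)
    (hV : ∀ t, HasDerivAt V (W t ^ 3 - W t) t)
    (heq : ∀ᶠ s in nhds (0:ℝ), u (x₀ + s • v) = W (x₀ ℓ + s * v ℓ))
    (hmin : IsLocalMin (fun x => u x - φ x) x₀) :
    fderiv ℝ (fderiv ℝ φ) x₀ v v ≤ (v ℓ)^2 * (W (x₀ ℓ) ^ 3 - W (x₀ ℓ)) := by
  set t₀ := x₀ ℓ with ht₀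
  set h : ℝ → ℝ := fun s => W (t₀ + s * v ℓ) - φ (x₀ + s • v) with hh
  set h' : ℝ → ℝ := fun s => v ℓ * V (t₀ + s * v ℓ) - fderiv ℝ φ (x₀ + s • v) v with hh'
  have hinner : ∀ s : ℝ, HasDerivAt (fun s : ℝ => t₀ + s * v ℓ) (v ℓ) s := by
    intro s
    simpa using ((hasDerivAt_id s).mul_const (v ℓ)).const_add t₀
  have hd1 : ∀ s, HasDerivAt h (h' s) s := by
    intro s
    have hWc : HasDerivAt (fun s : ℝ => W (t₀ + s * v ℓ)) (V (t₀ + s * v ℓ) * v ℓ) s :=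
      (hW _).comp s (hinner s)
    have := hWc.sub (StmtAux.phi_comp_hasDerivAt hφ x₀ v s)
    refine this.congr_deriv ?_
    simp [hh']; ring
  have hd2 : HasDerivAt h'
      ((v ℓ)^2 * (W t₀ ^ 3 - W t₀) - fderiv ℝ (fderiv ℝ φ) x₀ v v) 0 := by
    have hVc : HasDerivAt (fun s : ℝ => V (t₀ + s * v ℓ))
        ((W (t₀ + 0 * v ℓ) ^ 3 - W (t₀ + 0 * v ℓ)) * v ℓ) 0 := (hV _).comp 0 (hinner 0)
    have := (hVc.const_mul (v ℓ)).sub (StmtAux.phi_comp_deriv2 hφ x₀ v)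
    refine this.congr_deriv ?_
    simp; ring
  have hloc : IsLocalMin h 0 := by
    have htd : Tendsto (fun s : ℝ => x₀ + s • v) (nhds 0) (nhds x₀) := by
      have : Continuous (fun s : ℝ => x₀ + s • v) :=
        continuous_const.add (continuous_id.smul continuous_const)
      have h0 : x₀ + (0:ℝ) • v = x₀ := by simp
      have hca := this.continuousAt (x := (0:ℝ))
      rw [ContinuousAt, h0] at hca
      exact hca
    have hev := htd.eventually hmin
    have h00 : u x₀ = W t₀ := by
      have := heq.self_of_nhds; simpa using this
    filter_upwards [hev, heq] with s hs hseq
    simp only [hh]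
    rw [← hseq]
    calc W (t₀ + 0 * v ℓ) - φ (x₀ + (0:ℝ) • v) = u x₀ - φ x₀ := by simp [h00]
      _ ≤ u (x₀ + s • v) - φ (x₀ + s • v) := by simpa using hs
  have := StmtAux.sdt_min hd1 hd2 hloc
  linarith

def StmtAux.uve {N : ℕ} (a : Fin N) : EuclideanSpace ℝ (Fin N) :=
  WithLp.toLp 2 (fun m => if m = a then 1 else 0)

lemma StmtAux.corner_absurd {φ : EuclideanSpace ℝ (Fin N) → ℝ}
    (hφd : Differentiable ℝ φ) {w : ℝ → ℝ}
    {u : EuclideanSpace ℝ (Fin N) → ℝ} {ℓ : Fin N} (hu : ∀ x, u x = w (x ℓ))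
    {x₀ : EuclideanSpace ℝ (Fin N)} {dR dL : ℝ}
    (hR : HasDerivWithinAt w dR (Ici (x₀ ℓ)) (x₀ ℓ))
    (hL : HasDerivWithinAt w dL (Iic (x₀ ℓ)) (x₀ ℓ))
    (hlt : dL < dR) (hmax : IsLocalMax (fun x => u x - φ x) x₀) : False := by
  set t₀ := x₀ ℓ with ht₀
  set L : ℝ → EuclideanSpace ℝ (Fin N) :=
    fun t => x₀ + (t - t₀) • StmtAux.uve ℓ with hLdef
  have hL0 : L t₀ = x₀ := by simp [hLdef]
  have hLell : ∀ t, (L t) ℓ = t := by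
    intro t
    show x₀ ℓ + (t - t₀) * (if ℓ = ℓ then 1 else 0) = t
    simp [ht₀]
  have hLd : ∀ t, HasDerivAt L (StmtAux.uve ℓ) t := by
    intro t
    have h : HasDerivAt (fun t : ℝ => (t - t₀) • StmtAux.uve ℓ)
        ((1:ℝ) • (StmtAux.uve ℓ : EuclideanSpace ℝ (Fin N))) t :=
      ((hasDerivAt_id t).sub_const t₀).smul_const (StmtAux.uve ℓ)
    rw [one_smul] at h
    exact h.const_add x₀
  set ψ : ℝ → ℝ := fun t => φ (L t) with hψdef
  have hψ : HasDerivAt ψ (fderiv ℝ φ x₀ (StmtAux.uve ℓ)) t₀ := by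
    have hf : HasFDerivAt φ (fderiv ℝ φ x₀) (L t₀) := by
      rw [hL0]; exact (hφd x₀).hasFDerivAt
    exact hf.comp_hasDerivAt t₀ (hLd t₀)
  set d := fderiv ℝ φ x₀ (StmtAux.uve ℓ) with hd
  have hF : IsLocalMax (fun t => w t - ψ t) t₀ := by
    have htd : Tendsto L (nhds t₀) (nhds x₀) := by
      have hc : Continuous L :=
        continuous_const.add ((continuous_id.sub continuous_const).smul continuous_const)
      have := hc.continuousAt (x := t₀)
      rwa [ContinuousAt, hL0] at this
    have hev := htd.eventually hmax
    filter_upwards [hev] with t ht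
    have e1 : u (L t) - φ (L t) = w t - ψ t := by rw [hu, hLell]
    have e2 : u x₀ - φ x₀ = w t₀ - ψ t₀ := by
      show u x₀ - φ x₀ = w t₀ - φ (L t₀)
      rw [hu, ← ht₀, hL0]
    calc w t - ψ t = u (L t) - φ (L t) := e1.symm
      _ ≤ u x₀ - φ x₀ := ht
      _ = w t₀ - ψ t₀ := e2
  have h1 : dR - d ≤ 0 :=
    StmtAux.bdry_Ici hF (hR.sub (hψ.hasDerivWithinAt))
  have h2 : 0 ≤ dL - d :=
    StmtAux.bdry_Iic hF (hL.sub (hψ.hasDerivWithinAt))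
  linarith

end Key

section WFacts
variable {n : ℕ} (c : ℝ) (hc : 0 ≤ c) (w : ℝ → ℝ)
    (hw : ∀ t : ℝ, w t =
      if c ≤ t then Real.tanh ((t - c) / Real.sqrt 2)
      else if t ≤ -c then -Real.tanh ((t + c) / Real.sqrt 2)
      else 0)
    (u : EuclideanSpace ℝ (Fin (n + 2)) → ℝ)
    (hu : ∀ x, u x = w (x (Fin.last (n + 1))))

set_option linter.unusedSectionVars false

include hc hw

lemma StmtAux.w_max_eq : ∀ t, w t = max 0 (Real.tanh ((t - c) / Real.sqrt 2))
    + max 0 (-Real.tanh ((t + c) / Real.sqrt 2)) := by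
  intro t
  have hs2 : (0:ℝ) < Real.sqrt 2 := by positivity
  rw [hw t]
  split_ifs with h1 h2
  · rw [max_eq_right, max_eq_left]
    · simp
    · have h0 : (0:ℝ) ≤ (t + c)/Real.sqrt 2 := div_nonneg (by linarith) hs2.le
      simpa using StmtAux.tanh_nonneg h0
    · apply StmtAux.tanh_nonneg; apply div_nonneg (by linarith) hs2.le
  · rw [max_eq_left, max_eq_right]
    · ring
    · rw [le_neg]
      have h3 : (t + c)/Real.sqrt 2 ≤ 0 :=
        div_nonpos_of_nonpos_of_nonneg (by linarith) hs2.le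
      have := StmtAux.tanh_nonneg (x := -((t + c)/Real.sqrt 2)) (by linarith)
      rw [Real.tanh_neg] at this
      simpa [neg_div] using this
    · have h3 : (t - c)/Real.sqrt 2 ≤ 0 :=
        div_nonpos_of_nonpos_of_nonneg (by linarith) hs2.le
      have := StmtAux.tanh_nonneg (x := -((t - c)/Real.sqrt 2)) (by linarith)
      rw [Real.tanh_neg] at this
      linarith
  · push_neg at h1 h2
    rw [max_eq_left, max_eq_left]
    · simp
    · rw [neg_nonpos]
      apply StmtAux.tanh_nonneg; apply div_nonneg (by linarith) hs2.le
    · have h3 : (t - c)/Real.sqrt 2 ≤ 0 :=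
        div_nonpos_of_nonpos_of_nonneg (by linarith) hs2.le
      have := StmtAux.tanh_nonneg (x := -((t - c)/Real.sqrt 2)) (by linarith)
      rw [Real.tanh_neg] at this
      linarith

lemma StmtAux.w_cont : Continuous w := by
  have := StmtAux.w_max_eq c hc w hw
  have hweq : w = fun t => max 0 (Real.tanh ((t - c) / Real.sqrt 2))
      + max 0 (-Real.tanh ((t + c) / Real.sqrt 2)) := funext this
  rw [hweq]
  have hct : Continuous Real.tanh := by
    have : Real.tanh = fun x => Real.sinh x / Real.cosh x :=
      funext fun x => Real.tanh_eq_sinh_div_cosh x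
    rw [this]
    exact Real.continuous_sinh.div Real.continuous_cosh fun x => (Real.cosh_pos x).ne'
  fun_prop

lemma StmtAux.w_nonneg : ∀ t, 0 ≤ w t := by
  intro t
  rw [StmtAux.w_max_eq c hc w hw t]
  have := le_max_left (0:ℝ) (Real.tanh ((t - c) / Real.sqrt 2))
  have := le_max_left (0:ℝ) (-Real.tanh ((t + c) / Real.sqrt 2))
  linarith

lemma StmtAux.w_lt_one : ∀ t, w t < 1 := by
  intro t
  rw [hw t]
  split_ifs with h1 h2
  · exact StmtAux.tanh_lt_one _
  · have h := StmtAux.neg_one_lt_tanh ((t + c)/Real.sqrt 2)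
    linarith
  · norm_num

include hu in
lemma StmtAux.u_cont : Continuous u := by
  have hweq : u = fun x => w (x (Fin.last (n+1))) := funext hu
  rw [hweq]
  exact (StmtAux.w_cont c hc w hw).comp (PiLp.continuous_apply 2 _ (Fin.last (n+1)))

lemma StmtAux.w_tendsto_atTop : Filter.Tendsto w Filter.atTop (nhds 1) := by
  have h1 : Filter.Tendsto (fun t : ℝ => (t - c)/Real.sqrt 2) Filter.atTop Filter.atTop := by
    apply Filter.Tendsto.atTop_div_const (by positivity)
    exact Filter.tendsto_atTop_add_const_right Filter.atTop (-c) Filter.tendsto_id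
  have h2 := StmtAux.tendsto_tanh_atTop.comp h1
  apply h2.congr'
  filter_upwards [Filter.eventually_ge_atTop c] with t ht
  rw [hw t, if_pos ht]; rfl

lemma StmtAux.w_tendsto_atBot : Filter.Tendsto w Filter.atBot (nhds 1) := by
  have h1 : Filter.Tendsto (fun t : ℝ => -((t + c)/Real.sqrt 2)) Filter.atBot Filter.atTop := by
    apply Filter.tendsto_neg_atBot_atTop.comp
    apply Filter.Tendsto.atBot_div_const (by positivity)
    exact Filter.tendsto_atBot_add_const_right Filter.atBot c Filter.tendsto_id
  have h2 := StmtAux.tendsto_tanh_atTop.comp h1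
  apply h2.congr'
  filter_upwards [Filter.eventually_le_atBot (-c)] with t ht
  show Real.tanh (-((t + c)/Real.sqrt 2)) = w t
  rw [Real.tanh_neg, hw t]
  by_cases hct : c ≤ t
  · rw [if_pos hct]
    have hc0 : c = 0 := le_antisymm (by linarith) hc
    have ht0 : t = 0 := by rw [hc0] at hct ht; exact le_antisymm (by simpa using ht) hct
    rw [hc0, ht0]
    simp [Real.tanh_zero]
  · rw [if_neg hct, if_pos ht]

lemma StmtAux.w_not_mono : ¬ Monotone w := by
  intro hm
  have h1 : w (-c - 1) ≤ w c := hm (by linarith)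
  have h2 : w c = 0 := by
    rw [hw c, if_pos (le_refl c)]
    simp [Real.tanh_zero]
  have h3 : w (-c - 1) = Real.tanh (1/Real.sqrt 2) := by
    rw [hw]
    rw [if_neg (by linarith), if_pos (by linarith)]
    rw [show (-c - 1 + c : ℝ) = -1 by ring, neg_div, Real.tanh_neg]
    norm_num
  have h4 : 0 < Real.tanh (1/Real.sqrt 2) := StmtAux.tanh_pos (by positivity)
  rw [h2, h3] at h1
  linarith

lemma StmtAux.w_not_anti : ¬ Antitone w := by
  intro hm
  have h1 : w (c + 1) ≤ w c := hm (by linarith)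
  have h2 : w c = 0 := by
    rw [hw c, if_pos (le_refl c)]
    simp [Real.tanh_zero]
  have h3 : w (c + 1) = Real.tanh (1/Real.sqrt 2) := by
    rw [hw, if_pos (by linarith)]
    rw [show (c + 1 - c : ℝ) = 1 by ring]
  have h4 : 0 < Real.tanh (1/Real.sqrt 2) := StmtAux.tanh_pos (by positivity)
  rw [h2, h3] at h1
  linarith

end WFacts

section Visc
variable {n : ℕ}

lemma StmtAux.visc_sub (k : ℕ) (hk1 : 1 ≤ k) (hk2 : k ≤ n + 1)
    (c : ℝ) (hc : 0 ≤ c) (w : ℝ → ℝ)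
    (hw : ∀ t : ℝ, w t =
      if c ≤ t then Real.tanh ((t - c) / Real.sqrt 2)
      else if t ≤ -c then -Real.tanh ((t + c) / Real.sqrt 2)
      else 0)
    (u : EuclideanSpace ℝ (Fin (n + 2)) → ℝ)
    (hu : ∀ x, u x = w (x (Fin.last (n + 1)))) :
    IsViscSubsol k (fun s => s - s ^ 3) u := by
  have hs2 : (0:ℝ) < Real.sqrt 2 := by positivity
  have hnn := StmtAux.w_nonneg c hc w hw
  have hlt1 := StmtAux.w_lt_one c hc w hw
  intro φ hφ x₀ hmax
  set ℓ : Fin (n+2) := Fin.last (n+1) with hℓ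
  set t₀ : ℝ := x₀ ℓ with ht₀def
  have happ : ∀ (vv : EuclideanSpace ℝ (Fin (n+2))) (s : ℝ),
      (x₀ + s • vv) ℓ = x₀ ℓ + s * vv ℓ := fun vv s => rfl
  have hsmooth : ∀ W V : ℝ → ℝ, (∀ t, HasDerivAt W (V t) t) →
      (∀ t, HasDerivAt V (W t ^ 3 - W t) t) → (∀ᶠ t in nhds t₀, w t = W t) →
      0 ≤ truncLap k (hess φ x₀) + (fun s => s - s ^ 3) (u x₀) := by
    intro W V hW hV hloc
    have hwt0 : w t₀ = W t₀ := hloc.self_of_nhds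
    have hux : u x₀ = W t₀ := by rw [hu x₀]; exact hwt0
    have h0le : 0 ≤ W t₀ := by rw [← hwt0]; exact hnn t₀
    have h1lt : W t₀ < 1 := by rw [← hwt0]; exact hlt1 t₀
    have hTL : W t₀ ^ 3 - W t₀ ≤ truncLap k (hess φ x₀) := by
      apply StmtAux.le_truncLap
      · exact ⟨fun i => ⟨i.val, by have := i.isLt; omega⟩, fun a b hab =>
          Fin.ext (by simpa using congrArg Fin.val hab)⟩
      · intro v hON
        have hterm : ∀ i : Fin k, (v i ℓ)^2 * (W t₀ ^ 3 - W t₀) ≤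
            dotProduct ((hess φ x₀).mulVec (v i)) (v i) := by
          intro i
          rw [StmtAux.quad_eq' φ x₀ (v i)]
          apply StmtAux.key_max hφ x₀ (WithLp.toLp 2 (v i)) W V hW hV ?_ hmax
          have hcont : Continuous (fun s : ℝ => x₀ ℓ + s * (v i) ℓ) := by fun_prop
          have htd : Filter.Tendsto (fun s : ℝ => x₀ ℓ + s * (v i) ℓ)
              (nhds 0) (nhds t₀) := by
            have h := hcont.continuousAt (x := (0:ℝ))
            rw [ContinuousAt] at h
            simpa using h
          filter_upwards [htd.eventually hloc] with s hs
          rw [hu, happ (WithLp.toLp 2 (v i)) s]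
          exact hs
        have hb := StmtAux.bessel v hON ℓ
        have hq1 : 0 ≤ W t₀ * (1 - W t₀) := mul_nonneg h0le (by linarith)
        have hq2 : 0 ≤ W t₀ * W t₀ * (1 - W t₀) :=
          mul_nonneg (mul_nonneg h0le h0le) (by linarith)
        have hμ : W t₀ ^ 3 - W t₀ ≤ 0 := by nlinarith
        calc W t₀ ^ 3 - W t₀ = (W t₀ ^ 3 - W t₀) * 1 := (mul_one _).symm
          _ ≤ (W t₀ ^ 3 - W t₀) * (∑ i, (v i ℓ)^2) :=
              mul_le_mul_of_nonpos_left hb hμ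
          _ = ∑ i, (v i ℓ)^2 * (W t₀ ^ 3 - W t₀) := by
              rw [Finset.mul_sum]
              exact Finset.sum_congr rfl fun i _ => mul_comm _ _
          _ ≤ ∑ i, dotProduct ((hess φ x₀).mulVec (v i)) (v i) :=
              Finset.sum_le_sum fun i _ => hterm i
    show 0 ≤ truncLap k (hess φ x₀) + (u x₀ - u x₀ ^ 3)
    rw [hux]
    linarith
  rcases lt_trichotomy t₀ c with hA | hA | hA
  · rcases lt_trichotomy t₀ (-c) with hB | hB | hB
    · -- region t₀ < -c
      apply hsmooth _ _ (StmtAux.pairW_fst (-1) c) (StmtAux.pairW_snd (-1) c (by norm_num))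
      filter_upwards [eventually_lt_nhds hB] with t ht
      rw [hw t, if_neg (by linarith), if_pos ht.le]
      ring
    · -- kink at -c  (here c > 0)
      exfalso
      have hcpos : 0 < c := by linarith
      have hR : HasDerivWithinAt w 0 (Set.Ici t₀) t₀ := by
        rw [hB]
        apply (hasDerivWithinAt_const (-c) (Set.Ici (-c)) (0:ℝ)).congr_of_eventuallyEq ?_ ?_
        · have hev : ∀ᶠ t in nhdsWithin (-c) (Set.Ici (-c)), t < c :=
            nhdsWithin_le_nhds (eventually_lt_nhds (by linarith))
          filter_upwards [hev, self_mem_nhdsWithin] with t ht1 ht2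
          rw [hw t, if_neg (by linarith)]
          by_cases h : t ≤ -c
          · have hte : t = -c := le_antisymm h ht2
            rw [if_pos h, hte, show (-c + c : ℝ) = 0 by ring]
            simp [Real.tanh_zero]
          · rw [if_neg h]
        · rw [hw (-c), if_neg (by linarith), if_pos (le_refl _),
            show (-c + c : ℝ) = 0 by ring]
          simp [Real.tanh_zero]
      have hL : HasDerivWithinAt w
          (-1 * (1 - Real.tanh ((-c + c)/Real.sqrt 2)^2)/Real.sqrt 2) (Set.Iic t₀) t₀ := by
        rw [hB]
        apply ((StmtAux.pairW_fst (-1) c (-c)).hasDerivWithinAt).congr ?_ ?_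
        · intro t ht
          rw [hw t, if_neg (by linarith [Set.mem_Iic.1 ht]), if_pos (Set.mem_Iic.1 ht)]
          ring
        · rw [hw (-c), if_neg (by linarith), if_pos (le_refl _)]
          ring
      have hlt : -1 * (1 - Real.tanh ((-c + c)/Real.sqrt 2)^2)/Real.sqrt 2 < 0 := by
        rw [show (-c + c : ℝ) = 0 by ring, zero_div, Real.tanh_zero]
        rw [neg_one_mul, neg_div, neg_lt, neg_zero]
        norm_num
      exact StmtAux.corner_absurd (hφ.differentiable (by norm_num)) hu hR hL hlt hmax
    · -- flat region -c < t₀ < c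
      apply hsmooth (fun _ => (0:ℝ)) (fun _ => (0:ℝ)) (fun t => hasDerivAt_const t 0)
        (fun t => (hasDerivAt_const t (0:ℝ)).congr_deriv (by norm_num))
      filter_upwards [eventually_gt_nhds hB, eventually_lt_nhds hA] with t h1 h2
      rw [hw t, if_neg (by linarith), if_neg (by linarith)]
  · -- kink at c
    exfalso
    have hR : HasDerivWithinAt w
        (1 * (1 - Real.tanh ((c + -c)/Real.sqrt 2)^2)/Real.sqrt 2) (Set.Ici t₀) t₀ := by
      rw [hA]
      apply ((StmtAux.pairW_fst 1 (-c) c).hasDerivWithinAt).congr ?_ ?_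
      · intro t ht
        rw [hw t, if_pos (Set.mem_Ici.1 ht), one_mul, sub_eq_add_neg]
      · rw [hw c, if_pos (le_refl c), one_mul, sub_eq_add_neg]
    have hRval : (0:ℝ) < 1 * (1 - Real.tanh ((c + -c)/Real.sqrt 2)^2)/Real.sqrt 2 := by
      rw [show (c + -c : ℝ) = 0 by ring, zero_div, Real.tanh_zero]
      norm_num
    rcases eq_or_lt_of_le hc with hc0 | hcpos
    · -- c = 0
      have hL : HasDerivWithinAt w
          (-1 * (1 - Real.tanh ((c + c)/Real.sqrt 2)^2)/Real.sqrt 2) (Set.Iic t₀) t₀ := by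
        rw [hA]
        apply ((StmtAux.pairW_fst (-1) c c).hasDerivWithinAt).congr ?_ ?_
        · intro t ht
          rw [hw t]
          by_cases hct : c ≤ t
          · have hte : t = c := le_antisymm (Set.mem_Iic.1 ht) hct
            rw [if_pos hct, hte, ← hc0]
            norm_num [Real.tanh_zero]
          · rw [if_neg hct, if_pos (by rw [← hc0] at ht ⊢; simpa using Set.mem_Iic.1 ht)]
            ring
        · rw [hw c, if_pos (le_refl c), ← hc0]
          norm_num [Real.tanh_zero]
      have hlt : -1 * (1 - Real.tanh ((c + c)/Real.sqrt 2)^2)/Real.sqrt 2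
          < 1 * (1 - Real.tanh ((c + -c)/Real.sqrt 2)^2)/Real.sqrt 2 := by
        rw [← hc0]
        norm_num [Real.tanh_zero]
        rw [neg_div, one_div]
        have := inv_pos.mpr hs2
        linarith
      exact StmtAux.corner_absurd (hφ.differentiable (by norm_num)) hu hR hL hlt hmax
    · -- c > 0
      have hL : HasDerivWithinAt w 0 (Set.Iic t₀) t₀ := by
        rw [hA]
        apply (hasDerivWithinAt_const c (Set.Iic c) (0:ℝ)).congr_of_eventuallyEq ?_ ?_
        · have hev : ∀ᶠ t in nhdsWithin c (Set.Iic c), -c < t :=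
            nhdsWithin_le_nhds (eventually_gt_nhds (by linarith))
          filter_upwards [hev, self_mem_nhdsWithin] with t ht1 ht2
          rw [hw t]
          by_cases hct : c ≤ t
          · have hte : t = c := le_antisymm ht2 hct
            rw [if_pos hct, hte]
            norm_num [Real.tanh_zero]
          · rw [if_neg hct, if_neg (by linarith)]
        · rw [hw c, if_pos (le_refl c)]
          norm_num [Real.tanh_zero]
      exact StmtAux.corner_absurd (hφ.differentiable (by norm_num)) hu hR hL hRval hmax
  · -- region c < t₀
    apply hsmooth _ _ (StmtAux.pairW_fst 1 (-c)) (StmtAux.pairW_snd 1 (-c) (by norm_num))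
    filter_upwards [eventually_gt_nhds hA] with t ht
    rw [hw t, if_pos ht.le, one_mul, sub_eq_add_neg]

lemma StmtAux.visc_super (k : ℕ) (hk1 : 1 ≤ k) (hk2 : k ≤ n + 1)
    (c : ℝ) (hc : 0 ≤ c) (w : ℝ → ℝ)
    (hw : ∀ t : ℝ, w t =
      if c ≤ t then Real.tanh ((t - c) / Real.sqrt 2)
      else if t ≤ -c then -Real.tanh ((t + c) / Real.sqrt 2)
      else 0)
    (u : EuclideanSpace ℝ (Fin (n + 2)) → ℝ)
    (hu : ∀ x, u x = w (x (Fin.last (n + 1)))) :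
    IsViscSupersol k (fun s => s - s ^ 3) u := by
  have hs2 : (0:ℝ) < Real.sqrt 2 := by positivity
  intro φ hφ x₀ hmin
  set ℓ : Fin (n+2) := Fin.last (n+1) with hℓ
  set t₀ : ℝ := x₀ ℓ with ht₀def
  have happ : ∀ (vv : EuclideanSpace ℝ (Fin (n+2))) (s : ℝ),
      (x₀ + s • vv) ℓ = x₀ ℓ + s * vv ℓ := fun vv s => rfl
  have hℓval : (ℓ : Fin (n+2)).val = n + 1 := rfl
  -- the degenerate pair (W = V = 0)
  have hzpair : ∀ t : ℝ, HasDerivAt (fun _ : ℝ => (0:ℝ)) ((fun _ : ℝ => (0:ℝ)) t ^ 3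
      - (fun _ : ℝ => (0:ℝ)) t) t := fun t => by
    exact (hasDerivAt_const t (0:ℝ)).congr_deriv (by norm_num)
  have hzero_case : w t₀ = 0 →
      truncLap k (hess φ x₀) + (fun s => s - s ^ 3) (u x₀) ≤ 0 := by
    intro hw0
    have hux : u x₀ = 0 := by rw [hu x₀]; exact hw0
    set e : Fin k → Fin (n+2) := fun i => ⟨i.val, by have := i.isLt; omega⟩ with he
    have hinj : Function.Injective e := fun a b hab =>
      Fin.ext (by simpa [he] using congrArg Fin.val hab)
    have hON : ∀ i j, dotProduct (StmtAux.uv (e i)) (StmtAux.uv (e j))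
        = if i = j then (1:ℝ) else 0 := by
      intro i j; rw [StmtAux.uv_dot]
      rcases eq_or_ne i j with h | h
      · simp [h]
      · rw [if_neg (fun hcon => h (hinj hcon)), if_neg h]
    have hterm : ∀ i : Fin k,
        dotProduct ((hess φ x₀).mulVec (StmtAux.uv (e i))) (StmtAux.uv (e i)) ≤ 0 := by
      intro i
      rw [StmtAux.quad_eq' φ x₀ (StmtAux.uv (e i))]
      have hzℓ : (StmtAux.uv (e i) : Fin (n+2) → ℝ) ℓ = 0 := by
        rw [StmtAux.uv, if_neg]
        intro hcon
        have hval := congrArg Fin.val hcon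
        rw [hℓval, he] at hval
        have := i.isLt
        simp at hval
        omega
      have hkey := StmtAux.key_min (ℓ := ℓ) hφ x₀ (WithLp.toLp 2 (StmtAux.uv (e i))) (fun _ => (0:ℝ))
        (fun _ => (0:ℝ)) (fun t => hasDerivAt_const t 0) hzpair ?_ hmin
      · simpa using hkey
      · apply Filter.Eventually.of_forall
        intro s
        rw [hu, happ (WithLp.toLp 2 (StmtAux.uv (e i))) s]
        change w (x₀ ℓ + s * StmtAux.uv (e i) ℓ) = 0
        rw [hzℓ, mul_zero, add_zero]
        exact hw0
    have hTL := StmtAux.truncLap_le (hess φ x₀) (fun i => StmtAux.uv (e i)) hON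
    have hsum : ∑ i, dotProduct ((hess φ x₀).mulVec (StmtAux.uv (e i)))
        (StmtAux.uv (e i)) ≤ 0 := Finset.sum_nonpos fun i _ => hterm i
    show truncLap k (hess φ x₀) + (u x₀ - u x₀ ^ 3) ≤ 0
    rw [hux]
    norm_num
    linarith
  have hsmooth : ∀ W V : ℝ → ℝ, (∀ t, HasDerivAt W (V t) t) →
      (∀ t, HasDerivAt V (W t ^ 3 - W t) t) → (∀ᶠ t in nhds t₀, w t = W t) →
      truncLap k (hess φ x₀) + (fun s => s - s ^ 3) (u x₀) ≤ 0 := by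
    intro W V hW hV hloc
    have hwt0 : w t₀ = W t₀ := hloc.self_of_nhds
    have hux : u x₀ = W t₀ := by rw [hu x₀]; exact hwt0
    set e : Fin k → Fin (n+2) := fun i =>
      if i.val = 0 then ℓ else ⟨i.val - 1, by have := i.isLt; omega⟩ with he
    have hvals : ∀ i : Fin k, (e i).val = if i.val = 0 then n+1 else i.val - 1 := by
      intro i
      rw [he]
      split_ifs with h
      · simp [h, hℓval]
      · simp [h]
    have hne_ℓ : ∀ i : Fin k, i.val ≠ 0 → e i ≠ ℓ := by
      intro i h hcon
      have hval := congrArg Fin.val hcon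
      rw [hvals i, if_neg h, hℓval] at hval
      have := i.isLt
      omega
    have hinj : Function.Injective e := by
      intro a b hab
      have h := congrArg Fin.val hab
      rw [hvals a, hvals b] at h
      have ha := a.isLt; have hb := b.isLt
      apply Fin.ext
      split_ifs at h with h1 h2 h2 <;> omega
    have hON : ∀ i j, dotProduct (StmtAux.uv (e i)) (StmtAux.uv (e j))
        = if i = j then (1:ℝ) else 0 := by
      intro i j; rw [StmtAux.uv_dot]
      rcases eq_or_ne i j with h | h
      · simp [h]
      · rw [if_neg (fun hcon => h (hinj hcon)), if_neg h]
    have hterm : ∀ i : Fin k,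
        dotProduct ((hess φ x₀).mulVec (StmtAux.uv (e i))) (StmtAux.uv (e i))
          ≤ (StmtAux.uv (e i) ℓ)^2 * (W t₀ ^ 3 - W t₀) := by
      intro i
      rw [StmtAux.quad_eq' φ x₀ (StmtAux.uv (e i))]
      apply StmtAux.key_min hφ x₀ (WithLp.toLp 2 (StmtAux.uv (e i))) W V hW hV ?_ hmin
      have hcont : Continuous (fun s : ℝ => x₀ ℓ + s * (StmtAux.uv (e i)) ℓ) := by fun_prop
      have htd : Filter.Tendsto (fun s : ℝ => x₀ ℓ + s * (StmtAux.uv (e i)) ℓ)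
          (nhds 0) (nhds t₀) := by
        have h := hcont.continuousAt (x := (0:ℝ))
        rw [ContinuousAt] at h
        simpa using h
      filter_upwards [htd.eventually hloc] with s hs
      rw [hu, happ (WithLp.toLp 2 (StmtAux.uv (e i))) s]
      exact hs
    have hsum : ∑ i : Fin k, (StmtAux.uv (e i) ℓ)^2 * (W t₀ ^ 3 - W t₀)
        = W t₀ ^ 3 - W t₀ := by
      have hterm2 : ∀ i : Fin k, (StmtAux.uv (e i) ℓ)^2 * (W t₀ ^ 3 - W t₀)
          = if i = (⟨0, hk1⟩ : Fin k) then (W t₀ ^ 3 - W t₀) else 0 := by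
        intro i
        by_cases h : i = (⟨0, hk1⟩ : Fin k)
        · rw [if_pos h, h]
          have he0 : e ⟨0, hk1⟩ = ℓ := by rw [he]; simp
          rw [he0]
          have : (StmtAux.uv ℓ : Fin (n+2) → ℝ) ℓ = 1 := by rw [StmtAux.uv, if_pos rfl]
          rw [this]
          norm_num
        · rw [if_neg h]
          have hi0 : i.val ≠ 0 := by
            intro hv; exact h (Fin.ext hv)
          have hne := hne_ℓ i hi0
          have : (StmtAux.uv (e i) : Fin (n+2) → ℝ) ℓ = 0 := by
            rw [StmtAux.uv, if_neg (fun hcon => hne hcon.symm)]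
          rw [this]
          norm_num
      rw [Finset.sum_congr rfl fun i _ => hterm2 i]
      simp
    have hTL := StmtAux.truncLap_le (hess φ x₀) (fun i => StmtAux.uv (e i)) hON
    have hsum2 : ∑ i, dotProduct ((hess φ x₀).mulVec (StmtAux.uv (e i)))
        (StmtAux.uv (e i)) ≤ W t₀ ^ 3 - W t₀ := by
      rw [← hsum]
      exact Finset.sum_le_sum fun i _ => hterm i
    show truncLap k (hess φ x₀) + (u x₀ - u x₀ ^ 3) ≤ 0
    rw [hux]
    linarith
  rcases lt_trichotomy t₀ c with hA | hA | hA
  · rcases lt_trichotomy t₀ (-c) with hB | hB | hB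
    · apply hsmooth _ _ (StmtAux.pairW_fst (-1) c) (StmtAux.pairW_snd (-1) c (by norm_num))
      filter_upwards [eventually_lt_nhds hB] with t ht
      rw [hw t, if_neg (by linarith), if_pos ht.le]
      ring
    · apply hzero_case
      have hcpos : 0 < c := by linarith
      rw [hB, hw (-c), if_neg (by linarith), if_pos (le_refl _),
        show (-c + c : ℝ) = 0 by ring]
      simp [Real.tanh_zero]
    · apply hsmooth (fun _ => (0:ℝ)) (fun _ => (0:ℝ)) (fun t => hasDerivAt_const t 0) hzpair
      filter_upwards [eventually_gt_nhds hB, eventually_lt_nhds hA] with t h1 h2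
      rw [hw t, if_neg (by linarith), if_neg (by linarith)]
  · apply hzero_case
    rw [hA, hw c, if_pos (le_refl c)]
    simp [Real.tanh_zero]
  · apply hsmooth _ _ (StmtAux.pairW_fst 1 (-c)) (StmtAux.pairW_snd 1 (-c) (by norm_num))
    filter_upwards [eventually_gt_nhds hA] with t ht
    rw [hw t, if_pos ht.le, one_mul, sub_eq_add_neg]

end Visc

/-- for `c ≥ 0`, the one-dimensional function equal to `tanh((x_N-c)/√2)`
for `x_N ≥ c`, `0` for `|x_N| < c` and `-tanh((x_N+c)/√2)` for `x_N ≤ -c` is continuous,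
satisfies `|ũ| < 1`, is a viscosity solution of `P⁻ₖ(D²u) + u - u³ = 0` in `ℝ^N`, its
profile tends to `1` at both `+∞` and `-∞`, and in particular it is not monotone in the
`x_N`-direction. -/
theorem stmt4 {n : ℕ} (k : ℕ) (hk1 : 1 ≤ k) (hk2 : k ≤ n + 1)
    (c : ℝ) (hc : 0 ≤ c) (w : ℝ → ℝ)
    (hw : ∀ t : ℝ, w t =
      if c ≤ t then Real.tanh ((t - c) / Real.sqrt 2)
      else if t ≤ -c then -Real.tanh ((t + c) / Real.sqrt 2)
      else 0)
    (u : EuclideanSpace ℝ (Fin (n + 2)) → ℝ)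
    (hu : ∀ x, u x = w (x (Fin.last (n + 1)))) :
    Continuous u ∧ (∀ x, |u x| < 1) ∧
    IsViscSubsol k (fun s => s - s ^ 3) u ∧
    IsViscSupersol k (fun s => s - s ^ 3) u ∧
    Filter.Tendsto w Filter.atTop (nhds 1) ∧
    Filter.Tendsto w Filter.atBot (nhds 1) ∧
    ¬ Monotone w ∧ ¬ Antitone w := by
  refine ⟨StmtAux.u_cont c hc w hw u hu, ?_,
    StmtAux.visc_sub k hk1 hk2 c hc w hw u hu,
    StmtAux.visc_super k hk1 hk2 c hc w hw u hu,
    StmtAux.w_tendsto_atTop c hc w hw,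
    StmtAux.w_tendsto_atBot c hc w hw,
    StmtAux.w_not_mono c hc w hw,
    StmtAux.w_not_anti c hc w hw⟩
  intro x
  rw [hu x, abs_lt]
  constructor
  · have := StmtAux.w_nonneg c hc w hw (x (Fin.last (n+1)))
    linarith
  · exact StmtAux.w_lt_one c hc w hw _
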